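/- arXiv:1709.08620 — 2 statements merged into one kernel-verified Lean document; each statement's English description precedes it below -/
import Mathlib

section
/- Let h be a hom-Lie color algebra with Z(h) = 0, g a hom-Lie color algebra, and φ̄: g → Der(h)/Inn(h) a homomorphism of color Lie algebras. For any even linear lift φ: g → Der(h) of φ̄ (i.e. π∘φ = φ̄), there exists a unique even graded ε-skew-symmetric bilinear map ρ: g × g → h such that [φ_x, φ_y] - φ_{[x,y]} = ad(ρ(x,y)) for all homogeneous x, y ∈ g. -/
/-- A commutation factor on an abelian group `Γ` with values in the multiplicative group
of nonzero elements of a field `K`. -/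
structure CommutationFactor (K : Type) [Field K] (Γ : Type) [AddCommGroup Γ] where
  ε : Γ → Γ → K
  ne_zero : ∀ a b, ε a b ≠ 0
  add_left : ∀ a b c, ε (a + b) c = ε a c * ε b c
  add_right : ∀ a b c, ε a (b + c) = ε a b * ε a c
  mul_symm : ∀ a b, ε a b * ε b a = 1

/-- A hom-Lie color algebra structure on a `Γ`-graded `K`-vector space `g`:
an internal grading, a graded bilinear bracket, a degree-zero structure map `hom`,
`ε`-skew-symmetry and the `ε`-hom-Jacobi identity (all on homogeneous elements). -/
structure HomLieColorAlgebra (K Γ : Type) [Field K] [AddCommGroup Γ] [DecidableEq Γ]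
    (cf : CommutationFactor K Γ) (g : Type) [AddCommGroup g] [Module K g] where
  grading : Γ → Submodule K g
  internal : DirectSum.IsInternal grading
  bracket : g →ₗ[K] g →ₗ[K] g
  hom : g →ₗ[K] g
  hom_grade : ∀ a : Γ, ∀ x ∈ grading a, hom x ∈ grading a
  bracket_grade : ∀ a b : Γ, ∀ x ∈ grading a, ∀ y ∈ grading b,
    bracket x y ∈ grading (a + b)
  skew : ∀ a b : Γ, ∀ x ∈ grading a, ∀ y ∈ grading b,
    bracket x y = -(cf.ε a b) • bracket y x
  jacobi : ∀ a b c : Γ, ∀ x ∈ grading a, ∀ y ∈ grading b, ∀ z ∈ grading c,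
    cf.ε c a • bracket (hom x) (bracket y z)
      + cf.ε b c • bracket (hom z) (bracket x y)
      + cf.ε a b • bracket (hom y) (bracket z x) = 0

section Aux
open DirectSum

variable {K Γ : Type} [Field K] [AddCommGroup Γ] [DecidableEq Γ]
  {cf : CommutationFactor K Γ} {m : Type} [AddCommGroup m] [Module K m]

/-- The decomposition equivalence of a graded module. -/
noncomputable def HomLieColorAlgebra.dec (L : HomLieColorAlgebra K Γ cf m) :
    m ≃ₗ[K] ⨁ a, ↥(L.grading a) :=
  (LinearEquiv.ofBijective (DirectSum.coeLinearMap L.grading) L.internal).symm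

theorem HomLieColorAlgebra.ext_homog (L : HomLieColorAlgebra K Γ cf m) {N : Type*}
    [AddCommGroup N] [Module K N] (f : m →ₗ[K] N)
    (hf : ∀ a : Γ, ∀ x ∈ L.grading a, f x = 0) : f = 0 := by
  ext x
  have hx : x ∈ ⨆ a, L.grading a := by
    rw [L.internal.submodule_iSup_eq_top]; trivial
  refine Submodule.iSup_induction (motive := fun x => f x = 0) _ hx hf (map_zero f) ?_
  intro y z hy hz
  simp [map_add, hy, hz]

theorem HomLieColorAlgebra.dec_of (L : HomLieColorAlgebra K Γ cf m) {a : Γ} {x : m}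
    (hx : x ∈ L.grading a) :
    L.dec x = DirectSum.lof K Γ (fun a => L.grading a) a ⟨x, hx⟩ := by
  unfold HomLieColorAlgebra.dec
  rw [LinearEquiv.symm_apply_eq, DirectSum.lof_eq_of]
  exact (DirectSum.coeLinearMap_of (R := K) L.grading a ⟨x, hx⟩).symm

/-- Projection onto the degree `d` component. -/
noncomputable def HomLieColorAlgebra.proj (L : HomLieColorAlgebra K Γ cf m) (d : Γ) :
    m →ₗ[K] m :=
  (L.grading d).subtype ∘ₗ (DirectSum.component K Γ (fun a => ↥(L.grading a)) d) ∘ₗ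
    L.dec.toLinearMap

theorem HomLieColorAlgebra.proj_mem (L : HomLieColorAlgebra K Γ cf m) (d : Γ) (x : m) :
    L.proj d x ∈ L.grading d := by
  exact (L.dec x d).2

theorem HomLieColorAlgebra.proj_of_mem (L : HomLieColorAlgebra K Γ cf m) {d : Γ} {x : m}
    (hx : x ∈ L.grading d) : L.proj d x = x := by
  show ((L.dec x) d : m) = x
  rw [L.dec_of hx, DirectSum.lof_eq_of, DirectSum.of_eq_same]

theorem HomLieColorAlgebra.proj_of_mem_ne (L : HomLieColorAlgebra K Γ cf m) {d e : Γ} {x : m}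
    (hne : e ≠ d) (hx : x ∈ L.grading e) : L.proj d x = 0 := by
  show ((L.dec x) d : m) = 0
  rw [L.dec_of hx, DirectSum.lof_eq_of, DirectSum.of_eq_of_ne _ _ _ (Ne.symm hne)]
  rfl

theorem HomLieColorAlgebra.eq_zero_of_proj (L : HomLieColorAlgebra K Γ cf m) {x : m}
    (hx : ∀ d : Γ, L.proj d x = 0) : x = 0 := by
  have h0 : L.dec x = 0 := by
    refine DFinsupp.ext fun d => Subtype.ext ?_
    exact hx d
  have := congrArg L.dec.symm h0
  rw [LinearEquiv.symm_apply_apply] at this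
  rw [this]
  exact L.dec.symm.map_zero

theorem HomLieColorAlgebra.bracket_proj (L : HomLieColorAlgebra K Γ cf m) {b : Γ} {w : m}
    (hw : w ∈ L.grading b) (d : Γ) :
    L.bracket w ∘ₗ L.proj d = L.proj (b + d) ∘ₗ L.bracket w := by
  have := L.ext_homog (L.bracket w ∘ₗ L.proj d - L.proj (b + d) ∘ₗ L.bracket w) ?_
  · rw [sub_eq_zero] at this; exact this
  intro e x hx
  rw [LinearMap.sub_apply, LinearMap.comp_apply, LinearMap.comp_apply, sub_eq_zero]
  by_cases hde : d = e
  · subst hde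
    rw [L.proj_of_mem hx, L.proj_of_mem (L.bracket_grade b d w hw x hx)]
  · rw [L.proj_of_mem_ne (fun hc => hde hc.symm) hx,
      L.proj_of_mem_ne (fun hc => hde (add_left_cancel hc).symm) (L.bracket_grade b e w hw x hx),
      map_zero]

theorem HomLieColorAlgebra.zero_of_bracket_homog (L : HomLieColorAlgebra K Γ cf m)
    (hZ : ∀ x : m, (∀ y : m, L.bracket x y = 0) → x = 0) {d : Γ} {c : m}
    (hcm : c ∈ L.grading d) (hc : ∀ w : m, L.bracket w c = 0) : c = 0 := by
  apply hZ
  have h0 : L.bracket c = 0 := by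
    apply L.ext_homog
    intro b w hw
    rw [L.skew d b c hcm w hw, hc w, smul_zero]
  intro w; rw [h0]; rfl

theorem HomLieColorAlgebra.zero_of_bracket (L : HomLieColorAlgebra K Γ cf m)
    (hZ : ∀ x : m, (∀ y : m, L.bracket x y = 0) → x = 0) {c : m}
    (hc : ∀ w : m, L.bracket w c = 0) : c = 0 := by
  apply L.eq_zero_of_proj
  intro d
  apply L.zero_of_bracket_homog hZ (L.proj_mem d c)
  have key : L.bracket.flip (L.proj d c) = 0 := by
    apply L.ext_homog
    intro b w hw
    show L.bracket w (L.proj d c) = 0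
    have := congrArg (fun f => f c) (L.bracket_proj hw d)
    simp only [LinearMap.comp_apply] at this
    rw [this, hc w, map_zero]
  intro w
  have := congrArg (fun f => f w) key
  simpa using this

theorem HomLieColorAlgebra.mem_of_bracket (L : HomLieColorAlgebra K Γ cf m)
    (hZ : ∀ x : m, (∀ y : m, L.bracket x y = 0) → x = 0) {c : m} {d : Γ}
    (hc : ∀ b : Γ, ∀ w ∈ L.grading b, L.bracket w c ∈ L.grading (b + d)) :
    c ∈ L.grading d := by
  have h1 : c - L.proj d c = 0 := by
    apply L.zero_of_bracket hZ
    have key : L.bracket.flip (c - L.proj d c) = 0 := by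
      apply L.ext_homog
      intro b w hw
      show L.bracket w (c - L.proj d c) = 0
      have h2 := congrArg (fun f => f c) (L.bracket_proj hw d)
      simp only [LinearMap.comp_apply] at h2
      rw [map_sub, h2, L.proj_of_mem (hc b w hw), sub_self]
    intro w
    have := congrArg (fun f => f w) key
    simpa using this
  have := sub_eq_zero.mp h1
  rw [this]
  exact L.proj_mem d c

variable {h g : Type} [AddCommGroup h] [Module K h] [AddCommGroup g] [Module K g]

/-- The commutator defect as a bilinear map on a pair of graded pieces. -/
noncomputable def Dmap (φ : g →ₗ[K] h →ₗ[K] h) (Bg : g →ₗ[K] g →ₗ[K] g) (e : K)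
    (A B : Submodule K g) : A →ₗ[K] B →ₗ[K] (h →ₗ[K] h) :=
  LinearMap.mk₂ K
    (fun x y => φ x ∘ₗ φ y - e • (φ (y : g) ∘ₗ φ (x : g)) - φ (Bg x y))
    (by
      intro x1 x2 y; ext w
      simp only [Submodule.coe_add, map_add, LinearMap.add_apply, LinearMap.sub_apply,
        LinearMap.comp_apply, LinearMap.smul_apply, smul_add]
      abel)
    (by
      intro c x y; ext w
      simp only [SetLike.val_smul, map_smul, LinearMap.smul_apply, LinearMap.sub_apply,
        LinearMap.comp_apply, smul_sub, smul_comm c e])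
    (by
      intro x y1 y2; ext w
      simp only [Submodule.coe_add, map_add, LinearMap.add_apply, LinearMap.sub_apply,
        LinearMap.comp_apply, LinearMap.smul_apply, smul_add]
      abel)
    (by
      intro c x y; ext w
      simp only [SetLike.val_smul, map_smul, LinearMap.smul_apply, LinearMap.sub_apply,
        LinearMap.comp_apply, smul_sub, smul_comm c e])

theorem Dmap_apply (φ : g →ₗ[K] h →ₗ[K] h) (Bg : g →ₗ[K] g →ₗ[K] g) (e : K)
    {A B : Submodule K g} (x : A) (y : B) (w : h) :
    Dmap φ Bg e A B x y w = φ x (φ y w) - e • φ (y : g) (φ (x : g) w) - φ (Bg x y) w := by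
  simp [Dmap, LinearMap.mk₂_apply]

/-- Pulling back a bilinear map through an injective linear map. -/
noncomputable def rhoAB {A B : Type*} [AddCommGroup A] [Module K A] [AddCommGroup B]
    [Module K B] (D : A →ₗ[K] B →ₗ[K] (h →ₗ[K] h)) (ad : h →ₗ[K] (h →ₗ[K] h))
    (hinj : Function.Injective ad) (hmem : ∀ x y, D x y ∈ LinearMap.range ad) :
    A →ₗ[K] B →ₗ[K] h :=
  LinearMap.mk₂ K
    (fun x y => (LinearEquiv.ofInjective ad hinj).symm ⟨D x y, hmem x y⟩)
    (by
      intro x1 x2 y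
      rw [show (⟨D (x1 + x2) y, hmem _ _⟩ : LinearMap.range ad)
          = ⟨D x1 y, hmem _ _⟩ + ⟨D x2 y, hmem _ _⟩ from Subtype.ext (by simp), map_add])
    (by
      intro c x y
      rw [show (⟨D (c • x) y, hmem _ _⟩ : LinearMap.range ad)
          = c • ⟨D x y, hmem _ _⟩ from Subtype.ext (by simp), map_smul])
    (by
      intro x y1 y2
      rw [show (⟨D x (y1 + y2), hmem _ _⟩ : LinearMap.range ad)
          = ⟨D x y1, hmem _ _⟩ + ⟨D x y2, hmem _ _⟩ from Subtype.ext (by simp), map_add])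
    (by
      intro c x y
      rw [show (⟨D x (c • y), hmem _ _⟩ : LinearMap.range ad)
          = c • ⟨D x y, hmem _ _⟩ from Subtype.ext (by simp), map_smul])

theorem rhoAB_spec {A B : Type*} [AddCommGroup A] [Module K A] [AddCommGroup B]
    [Module K B] (D : A →ₗ[K] B →ₗ[K] (h →ₗ[K] h)) (ad : h →ₗ[K] (h →ₗ[K] h))
    (hinj : Function.Injective ad) (hmem : ∀ x y, D x y ∈ LinearMap.range ad)
    (x : A) (y : B) : ad (rhoAB D ad hinj hmem x y) = D x y := by
  have : rhoAB D ad hinj hmem x y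
      = (LinearEquiv.ofInjective ad hinj).symm ⟨D x y, hmem x y⟩ := by
    simp [rhoAB, LinearMap.mk₂_apply]
  rw [this]
  have h2 := (LinearEquiv.ofInjective ad hinj).apply_symm_apply ⟨D x y, hmem x y⟩
  have h3 := congrArg Subtype.val h2
  rwa [LinearEquiv.ofInjective_apply] at h3

/-- Assembling a bilinear map on `g` from its restrictions to the graded pieces. -/
noncomputable def assemble (Lg : HomLieColorAlgebra K Γ cf g)
    (F : ∀ a b : Γ, ↥(Lg.grading a) →ₗ[K] ↥(Lg.grading b) →ₗ[K] h) :
    g →ₗ[K] g →ₗ[K] h :=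
  (DirectSum.toModule K Γ (g →ₗ[K] h) (fun a =>
    ((DirectSum.toModule K Γ (↥(Lg.grading a) →ₗ[K] h) (fun b => (F a b).flip)) ∘ₗ
      Lg.dec.toLinearMap).flip)) ∘ₗ Lg.dec.toLinearMap

theorem assemble_apply (Lg : HomLieColorAlgebra K Γ cf g)
    (F : ∀ a b : Γ, ↥(Lg.grading a) →ₗ[K] ↥(Lg.grading b) →ₗ[K] h)
    {a b : Γ} {x y : g} (hx : x ∈ Lg.grading a) (hy : y ∈ Lg.grading b) :
    assemble Lg F x y = F a b ⟨x, hx⟩ ⟨y, hy⟩ := by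
  unfold assemble
  rw [LinearMap.comp_apply, LinearEquiv.coe_coe, Lg.dec_of hx, DirectSum.toModule_lof,
    LinearMap.flip_apply, LinearMap.comp_apply, LinearEquiv.coe_coe, Lg.dec_of hy,
    DirectSum.toModule_lof, LinearMap.flip_apply]

end Aux

/-- If `Z(h) = 0` and `φ : g → Der(h)` is an even linear lift of a homomorphism
`φ̄ : g → Der(h)/Inn(h)` (so the commutator defect of `φ` is always inner), there is a
unique even graded ε-skew-symmetric bilinear `ρ : g × g → h` with
`[φ_x, φ_y] - φ_{[x,y]} = ad(ρ(x,y))`. -/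
theorem unique_rho_of_lift {K Γ h g : Type} [Field K] [CharZero K]
    [AddCommGroup Γ] [DecidableEq Γ] [AddCommGroup h] [Module K h]
    [AddCommGroup g] [Module K g] {cf : CommutationFactor K Γ}
    (Lh : HomLieColorAlgebra K Γ cf h) (Lg : HomLieColorAlgebra K Γ cf g)
    -- h has trivial center
    (hZ : ∀ x : h, (∀ y : h, Lh.bracket x y = 0) → x = 0)
    -- φ is an even linear map into derivations of h
    (φ : g →ₗ[K] h →ₗ[K] h)
    (hφ_grade : ∀ a : Γ, ∀ x ∈ Lg.grading a, ∀ c : Γ, ∀ y ∈ Lh.grading c,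
      φ x y ∈ Lh.grading (c + a))
    (hφ_hom : ∀ x : g, ∀ y : h, φ x (Lh.hom y) = Lh.hom (φ x y))
    (hφ_der : ∀ a : Γ, ∀ x ∈ Lg.grading a, ∀ b c : Γ, ∀ y ∈ Lh.grading b, ∀ z ∈ Lh.grading c,
      φ x (Lh.bracket y z) = Lh.bracket (φ x y) z + cf.ε a b • Lh.bracket y (φ x z))
    -- φ lifts a homomorphism φ̄ : g → Der(h)/Inn(h): the commutator defect is inner
    (hlift : ∀ a b : Γ, ∀ x ∈ Lg.grading a, ∀ y ∈ Lg.grading b,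
      ∃ c : h, ∀ w : h,
        φ x (φ y w) - cf.ε a b • φ y (φ x w) - φ (Lg.bracket x y) w = Lh.bracket w c) :
    ∃! ρ : g →ₗ[K] g →ₗ[K] h,
      (∀ a b : Γ, ∀ x ∈ Lg.grading a, ∀ y ∈ Lg.grading b,
        ρ x y ∈ Lh.grading (a + b)) ∧
      (∀ a b : Γ, ∀ x ∈ Lg.grading a, ∀ y ∈ Lg.grading b,
        ρ x y = -(cf.ε a b) • ρ y x) ∧
      (∀ a b : Γ, ∀ x ∈ Lg.grading a, ∀ y ∈ Lg.grading b, ∀ w : h,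
        φ x (φ y w) - cf.ε a b • φ y (φ x w) - φ (Lg.bracket x y) w
          = Lh.bracket w (ρ x y)) := by
  classical
  have ad_inj : Function.Injective Lh.bracket.flip := by
    intro c c' hcc
    have hz : ∀ w, Lh.bracket w (c - c') = 0 := by
      intro w
      have h1 := congrArg (fun f => f w) hcc
      simp only [LinearMap.flip_apply] at h1
      rw [map_sub, h1, sub_self]
    exact sub_eq_zero.mp (Lh.zero_of_bracket hZ hz)
  have hmem : ∀ a b : Γ, ∀ (x : ↥(Lg.grading a)) (y : ↥(Lg.grading b)),
      Dmap φ Lg.bracket (cf.ε a b) (Lg.grading a) (Lg.grading b) x y ∈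
        LinearMap.range Lh.bracket.flip := by
    intro a b x y
    obtain ⟨c, hc⟩ := hlift a b x x.2 y y.2
    refine ⟨c, ?_⟩
    ext w
    rw [LinearMap.flip_apply, Dmap_apply]
    exact (hc w).symm
  set ρ : g →ₗ[K] g →ₗ[K] h := assemble Lg (fun a b =>
    rhoAB (Dmap φ Lg.bracket (cf.ε a b) (Lg.grading a) (Lg.grading b))
      Lh.bracket.flip ad_inj (hmem a b)) with hρdef
  have key : ∀ a b : Γ, ∀ x, ∀ hx : x ∈ Lg.grading a, ∀ y, ∀ hy : y ∈ Lg.grading b, ∀ w : h,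
      Lh.bracket w (ρ x y)
        = φ x (φ y w) - cf.ε a b • φ y (φ x w) - φ (Lg.bracket x y) w := by
    intro a b x hx y hy w
    rw [hρdef, assemble_apply Lg _ hx hy]
    have h1 := rhoAB_spec (Dmap φ Lg.bracket (cf.ε a b) (Lg.grading a) (Lg.grading b))
      Lh.bracket.flip ad_inj (hmem a b) ⟨x, hx⟩ ⟨y, hy⟩
    have h2 := congrArg (fun f => f w) h1
    simp only [LinearMap.flip_apply] at h2
    rw [h2, Dmap_apply]
  refine ⟨ρ, ⟨?_, ?_, ?_⟩, ?_⟩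
  · -- grading
    intro a b x hx y hy
    apply Lh.mem_of_bracket hZ
    intro e w hw
    rw [key a b x hx y hy w]
    have t1 : φ x (φ y w) ∈ Lh.grading (e + (a + b)) := by
      have := hφ_grade a x hx (e + b) (φ y w) (hφ_grade b y hy e w hw)
      rwa [show e + b + a = e + (a + b) by abel] at this
    have t2 : φ y (φ x w) ∈ Lh.grading (e + (a + b)) := by
      have := hφ_grade b y hy (e + a) (φ x w) (hφ_grade a x hx e w hw)
      rwa [show e + a + b = e + (a + b) by abel] at this
    have t3 : φ (Lg.bracket x y) w ∈ Lh.grading (e + (a + b)) :=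
      hφ_grade (a + b) _ (Lg.bracket_grade a b x hx y hy) e w hw
    exact sub_mem (sub_mem t1 (Submodule.smul_mem _ _ t2)) t3
  · -- skew
    intro a b x hx y hy
    apply ad_inj
    ext w
    simp only [LinearMap.flip_apply, map_smul, LinearMap.smul_apply, map_neg, neg_smul,
      LinearMap.neg_apply]
    rw [key a b x hx y hy w, key b a y hy x hx w, Lg.skew b a y hy x hx]
    simp only [map_smul, map_neg, neg_smul, LinearMap.neg_apply, LinearMap.smul_apply,
      smul_sub, smul_smul, smul_neg, neg_neg, neg_sub, cf.mul_symm a b, one_smul]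
    abel
  · -- bracket property
    intro a b x hx y hy w
    exact (key a b x hx y hy w).symm
  · -- uniqueness
    intro ρ' hρ'
    obtain ⟨-, -, h3'⟩ := hρ'
    have hsub : ρ' - ρ = 0 := by
      apply Lg.ext_homog
      intro a x hx
      have : (ρ' - ρ) x = 0 := by
        apply Lg.ext_homog
        intro b y hy
        simp only [LinearMap.sub_apply]
        rw [sub_eq_zero]
        apply ad_inj
        ext w
        simp only [LinearMap.flip_apply]
        rw [key a b x hx y hy w]
        exact (h3' a b x hx y hy w).symm
      exact this
    exact sub_eq_zero.mp hsub
end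

section
/- Let (g, [·,·], ε, α) be a regular multiplicative hom-Lie color algebra (α an automorphism). Then (g, [·,·]', ε) with [x,y]' := α^{-1}([x,y]) is a color Lie algebra, i.e. it satisfies the ε-Jacobi identity Σ_{cyclic{x,y,z}} ε(z̄,x̄)[x,[y,z]']' = 0. -/
/-- Inverse Yau twist: for a regular multiplicative hom-Lie color algebra `(g,[·,·],ε,α)`,
the bracket `[x,y]' = α⁻¹([x,y])` satisfies the untwisted ε-Jacobi identity, so
`(g, [·,·]', ε)` is a color Lie algebra. -/
theorem inverse_yau_twist {K Γ g : Type} [Field K] [CharZero K]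
    [AddCommGroup Γ] [DecidableEq Γ] [AddCommGroup g] [Module K g]
    {cf : CommutationFactor K Γ} (L : HomLieColorAlgebra K Γ cf g)
    (hmul : ∀ x y : g, L.hom (L.bracket x y) = L.bracket (L.hom x) (L.hom y))
    -- regularity: α is an automorphism, with inverse αinv
    (αinv : g →ₗ[K] g)
    (hinv₁ : ∀ x : g, αinv (L.hom x) = x) (hinv₂ : ∀ x : g, L.hom (αinv x) = x) :
    -- the ε-Jacobi identity for [x,y]' := α⁻¹([x,y])
    ∀ a b c : Γ, ∀ x ∈ L.grading a, ∀ y ∈ L.grading b, ∀ z ∈ L.grading c,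
      cf.ε c a • αinv (L.bracket x (αinv (L.bracket y z)))
        + cf.ε b c • αinv (L.bracket z (αinv (L.bracket x y)))
        + cf.ε a b • αinv (L.bracket y (αinv (L.bracket z x))) = 0 := by
  intro a b c x hx y hy z hz
  have hinj : Function.Injective L.hom := Function.LeftInverse.injective hinv₁
  -- αinv is a bracket homomorphism
  have hbr : ∀ u v : g, αinv (L.bracket u v) = L.bracket (αinv u) (αinv v) := by
    intro u v
    apply hinj
    rw [hinv₂, hmul, hinv₂, hinv₂]
  -- αinv preserves the grading
  haveI : DirectSum.Decomposition L.grading := L.internal.chooseDecomposition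
  have hcomm : ∀ (b : Γ) (v : g),
      (DirectSum.decompose L.grading (L.hom v) b : g)
        = L.hom (DirectSum.decompose L.grading v b : g) := by
    intro b v
    induction v using DirectSum.Decomposition.inductionOn L.grading with
    | zero => simp
    | @homogeneous i m =>
        rcases m with ⟨m, hm⟩
        by_cases hib : i = b
        · subst hib
          rw [DirectSum.decompose_of_mem_same L.grading hm,
            DirectSum.decompose_of_mem_same L.grading (L.hom_grade i m hm)]
        · rw [DirectSum.decompose_of_mem_ne L.grading hm hib,
            DirectSum.decompose_of_mem_ne L.grading (L.hom_grade i m hm) hib, map_zero]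
    | add m m' hm hm' =>
        rw [map_add, DirectSum.decompose_add, DirectSum.add_apply,
          Submodule.coe_add, hm, hm', DirectSum.decompose_add, DirectSum.add_apply,
          Submodule.coe_add, map_add]
  have hmem : ∀ (a : Γ) (v : g), v ∈ L.grading a → αinv v ∈ L.grading a := by
    intro a v hv
    have hzero : ∀ b : Γ, b ≠ a → DirectSum.decompose L.grading (αinv v) b = 0 := by
      intro b hb
      have h1 : (DirectSum.decompose L.grading (L.hom (αinv v)) b : g) = 0 := by
        rw [hinv₂, DirectSum.decompose_of_mem_ne L.grading hv (Ne.symm hb)]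
      rw [hcomm] at h1
      have h2 : (DirectSum.decompose L.grading (αinv v) b : g) = 0 := by
        apply hinj; rw [h1, map_zero]
      exact Subtype.ext h2
    have hdec : DirectSum.decompose L.grading (αinv v)
        = DirectSum.of (fun i => L.grading i) a (DirectSum.decompose L.grading (αinv v) a) := by
      refine DFinsupp.ext fun b => ?_
      by_cases hb : b = a
      · subst hb; rw [DirectSum.of_eq_same]
      · rw [hzero b hb, DirectSum.of_eq_of_ne _ _ _ hb]
    have : αinv v = ((DirectSum.decompose L.grading (αinv v) a : L.grading a) : g) := by
      conv_lhs => rw [← (DirectSum.decompose L.grading).symm_apply_apply (αinv v), hdec,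
        DirectSum.decompose_symm_of]
    rw [this]
    exact (DirectSum.decompose L.grading (αinv v) a).2
  -- apply the hom-Jacobi identity to αinv² x, αinv² y, αinv² z
  have hx2 : αinv (αinv x) ∈ L.grading a := hmem a _ (hmem a x hx)
  have hy2 : αinv (αinv y) ∈ L.grading b := hmem b _ (hmem b y hy)
  have hz2 : αinv (αinv z) ∈ L.grading c := hmem c _ (hmem c z hz)
  have hJ := L.jacobi a b c _ hx2 _ hy2 _ hz2
  rw [hinv₂, hinv₂, hinv₂] at hJ
  calc cf.ε c a • αinv (L.bracket x (αinv (L.bracket y z)))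
        + cf.ε b c • αinv (L.bracket z (αinv (L.bracket x y)))
        + cf.ε a b • αinv (L.bracket y (αinv (L.bracket z x)))
      = cf.ε c a • L.bracket (αinv x) (L.bracket (αinv (αinv y)) (αinv (αinv z)))
        + cf.ε b c • L.bracket (αinv z) (L.bracket (αinv (αinv x)) (αinv (αinv y)))
        + cf.ε a b • L.bracket (αinv y) (L.bracket (αinv (αinv z)) (αinv (αinv x))) := by
        simp only [hbr]
    _ = 0 := hJ
end
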